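/- Let n ≥ 2, 1 < p < 2, and Λ₁ ≥ Λ₀ > 0. Let a : ℝⁿ → ℝⁿ be continuous with a(0) = 0, continuously differentiable on ℝⁿ ∖ {0}, and suppose that for every ξ ∈ ℝⁿ ∖ {0} and every η ∈ ℝⁿ one has |a(ξ)| + |ξ| ‖Da(ξ)‖ ≤ Λ₁ |ξ|^{p−1} and ⟨Da(ξ) η, η⟩ ≥ Λ₀ |ξ|^{p−2} |η|². Then there exists a constant Λ̃₀ = Λ̃₀(n, Λ₀, p) > 0 such that ⟨a(ξ₁) − a(ξ₂), ξ₁ − ξ₂⟩ ≥ Λ̃₀ (|ξ₁|² + |ξ₂|²)^{(p−2)/2} |ξ₁ − ξ₂|² for all ξ₁, ξ₂ ∈ ℝⁿ with (ξ₁, ξ₂) ≠ (0,0). -/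

import Mathlib

open MeasureTheory Set Metric
open scoped ENNReal

noncomputable section

set_option maxHeartbeats 1000000 in
/-- Monotonicity of a singular (`1 < p < 2`) operator from growth/ellipticity conditions. -/
theorem stmt9 (n : ℕ) (hn : 2 ≤ n) (p : ℝ) (hp1 : 1 < p) (hp2 : p < 2) (Λ₀ Λ₁ : ℝ)
    (hΛ₀ : 0 < Λ₀) (hΛ : Λ₀ ≤ Λ₁)
    (a : EuclideanSpace ℝ (Fin n) → EuclideanSpace ℝ (Fin n))
    (Da : EuclideanSpace ℝ (Fin n) → (EuclideanSpace ℝ (Fin n) →L[ℝ] EuclideanSpace ℝ (Fin n)))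
    (ha_cont : Continuous a) (ha0 : a 0 = 0)
    (ha_diff : ∀ ξ : EuclideanSpace ℝ (Fin n), ξ ≠ 0 → HasFDerivAt a (Da ξ) ξ)
    (ha_cdiff : ContinuousOn Da {(0 : EuclideanSpace ℝ (Fin n))}ᶜ)
    (hgrowth : ∀ ξ : EuclideanSpace ℝ (Fin n), ξ ≠ 0 →
      ‖a ξ‖ + ‖ξ‖ * ‖Da ξ‖ ≤ Λ₁ * ‖ξ‖ ^ (p - 1))
    (hellip : ∀ ξ : EuclideanSpace ℝ (Fin n), ξ ≠ 0 → ∀ η : EuclideanSpace ℝ (Fin n),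
      Λ₀ * ‖ξ‖ ^ (p - 2) * ‖η‖ ^ 2 ≤ (inner ℝ (Da ξ η) η : ℝ)) :
    ∃ c : ℝ, 0 < c ∧ ∀ ξ₁ ξ₂ : EuclideanSpace ℝ (Fin n), ¬(ξ₁ = 0 ∧ ξ₂ = 0) →
      c * (‖ξ₁‖ ^ 2 + ‖ξ₂‖ ^ 2) ^ ((p - 2) / 2) * ‖ξ₁ - ξ₂‖ ^ 2 ≤
        (inner ℝ (a ξ₁ - a ξ₂) (ξ₁ - ξ₂) : ℝ) := by
  refine ⟨Λ₀, hΛ₀, fun ξ₁ ξ₂ hξ => ?_⟩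
  by_cases hΔ0 : ξ₁ - ξ₂ = 0
  · simp [hΔ0]
  set Δ : EuclideanSpace ℝ (Fin n) := ξ₁ - ξ₂ with hΔdef
  set S : ℝ := ‖ξ₁‖ ^ 2 + ‖ξ₂‖ ^ 2 with hSdef
  have hS : 0 < S := by
    rcases not_and_or.1 hξ with h | h
    · have := norm_pos_iff.2 h
      have h2 : (0:ℝ) < ‖ξ₁‖ ^ 2 := by positivity
      have h3 : (0:ℝ) ≤ ‖ξ₂‖ ^ 2 := by positivity
      linarith
    · have := norm_pos_iff.2 h
      have h2 : (0:ℝ) < ‖ξ₂‖ ^ 2 := by positivity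
      have h3 : (0:ℝ) ≤ ‖ξ₁‖ ^ 2 := by positivity
      linarith
  set K : ℝ := Λ₀ * S ^ ((p - 2) / 2) * ‖Δ‖ ^ 2 with hKdef
  set γ : ℝ → EuclideanSpace ℝ (Fin n) := fun t => ξ₂ + t • Δ with hγdef
  set g : ℝ → ℝ := fun t => (inner ℝ (a (γ t)) Δ : ℝ) with hgdef
  set h : ℝ → ℝ := fun t => g t - K * t with hhdef
  have hγ0 : γ 0 = ξ₂ := by simp [hγdef]
  have hγ1 : γ 1 = ξ₁ := by simp [hγdef, hΔdef]
  -- norm bound on the segment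
  have hnormle : ∀ t : ℝ, t ∈ Icc (0:ℝ) 1 → ‖γ t‖ ≤ Real.sqrt S := by
    intro t ht
    have hrepr : γ t = (1 - t) • ξ₂ + t • ξ₁ := by
      simp only [hγdef, hΔdef, smul_sub, sub_smul, one_smul]
      abel
    have h1 : ‖γ t‖ ≤ (1 - t) * ‖ξ₂‖ + t * ‖ξ₁‖ := by
      rw [hrepr]
      calc ‖(1 - t) • ξ₂ + t • ξ₁‖ ≤ ‖(1 - t) • ξ₂‖ + ‖t • ξ₁‖ := norm_add_le _ _
        _ = (1 - t) * ‖ξ₂‖ + t * ‖ξ₁‖ := by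
            rw [norm_smul, norm_smul, Real.norm_eq_abs, Real.norm_eq_abs,
              abs_of_nonneg (by linarith [ht.2]), abs_of_nonneg ht.1]
    have h2 : ((1 - t) * ‖ξ₂‖ + t * ‖ξ₁‖) ^ 2 ≤ S := by
      have ht0 := ht.1; have ht1 := ht.2
      have hn1 : (0:ℝ) ≤ ‖ξ₁‖ := norm_nonneg _
      have hn2 : (0:ℝ) ≤ ‖ξ₂‖ := norm_nonneg _
      simp only [hSdef]
      nlinarith [sq_nonneg (‖ξ₁‖ - ‖ξ₂‖), sq_nonneg ((1-t)*‖ξ₂‖ - t*‖ξ₁‖),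
        mul_nonneg (mul_nonneg ht0 (by linarith : (0:ℝ) ≤ 1 - t)) (sq_nonneg (‖ξ₁‖ - ‖ξ₂‖))]
    have h3 : (1 - t) * ‖ξ₂‖ + t * ‖ξ₁‖ ≤ Real.sqrt S := by
      have hnn : (0:ℝ) ≤ (1 - t) * ‖ξ₂‖ + t * ‖ξ₁‖ := by
        have := ht.1; have := ht.2
        have hn1 : (0:ℝ) ≤ ‖ξ₁‖ := norm_nonneg _
        have hn2 : (0:ℝ) ≤ ‖ξ₂‖ := norm_nonneg _
        nlinarith
      exact Real.le_sqrt_of_sq_le h2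
    linarith
  -- key derivative lower bound
  have hkey : ∀ t : ℝ, t ∈ Icc (0:ℝ) 1 → γ t ≠ 0 → K ≤ (inner ℝ (Da (γ t) Δ) Δ : ℝ) := by
    intro t ht hne
    have hell := hellip (γ t) hne Δ
    have hpow : S ^ ((p - 2) / 2) ≤ ‖γ t‖ ^ (p - 2) := by
      have hrw : S ^ ((p - 2) / 2) = (Real.sqrt S) ^ (p - 2) := by
        rw [Real.sqrt_eq_rpow, ← Real.rpow_mul hS.le]
        ring_nf
      rw [hrw]
      exact Real.rpow_le_rpow_of_nonpos (norm_pos_iff.2 hne) (hnormle t ht) (by linarith)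
    have : K ≤ Λ₀ * ‖γ t‖ ^ (p - 2) * ‖Δ‖ ^ 2 := by
      rw [hKdef]
      exact mul_le_mul_of_nonneg_right
        (mul_le_mul_of_nonneg_left hpow hΛ₀.le) (by positivity)
    linarith
  -- derivative of h at points where γ t ≠ 0
  have hderiv : ∀ t : ℝ, γ t ≠ 0 →
      HasDerivAt h ((inner ℝ (Da (γ t) Δ) Δ : ℝ) - K) t := by
    intro t hne
    have hγd : HasDerivAt γ Δ t := by
      have : HasDerivAt (fun s : ℝ => ξ₂ + s • Δ) ((1:ℝ) • Δ) t :=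
        ((hasDerivAt_id t).smul_const Δ).const_add ξ₂
      rw [one_smul] at this
      exact this
    have hcomp : HasDerivAt (fun s => a (γ s)) (Da (γ t) Δ) t :=
      (ha_diff (γ t) hne).comp_hasDerivAt t hγd
    have hg' : HasDerivAt g ((inner ℝ (Da (γ t) Δ) Δ : ℝ)) t := by
      have := hcomp.inner ℝ (hasDerivAt_const t Δ)
      simpa using this
    have := hg'.sub ((hasDerivAt_id t).const_mul K)
    rw [mul_one] at this
    exact this
  have hcont : Continuous h := by
    have hγc : Continuous γ := by
      apply continuous_const.add (continuous_id.smul continuous_const)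
    exact ((ha_cont.comp hγc).inner continuous_const).sub (continuous_const.mul continuous_id)
  -- monotonicity on subintervals avoiding the singularity
  have hmono : ∀ u v : ℝ, 0 ≤ u → v ≤ 1 → u ≤ v →
      (∀ t ∈ Ioo u v, γ t ≠ 0) → h u ≤ h v := by
    intro u v hu hv huv hno
    have : MonotoneOn h (Icc u v) := by
      apply monotoneOn_of_hasDerivWithinAt_nonneg (convex_Icc u v) hcont.continuousOn
        (f' := fun t => (inner ℝ (Da (γ t) Δ) Δ : ℝ) - K)
      · intro t ht
        rw [interior_Icc] at ht
        exact (hderiv t (hno t ht)).hasDerivWithinAt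
      · intro t ht
        rw [interior_Icc] at ht
        have htI : t ∈ Icc (0:ℝ) 1 := ⟨le_trans hu ht.1.le, le_trans ht.2.le hv⟩
        linarith [hkey t htI (hno t ht)]
    exact this (left_mem_Icc.2 huv) (right_mem_Icc.2 huv) huv
  have hinj : Function.Injective γ := by
    intro s t hst
    simp only [hγdef, add_right_inj] at hst
    have := sub_eq_zero.2 hst
    rw [← sub_smul] at this
    rcases smul_eq_zero.1 this with h' | h'
    · exact sub_eq_zero.1 h'
    · exact absurd h' hΔ0
  have hmain : h 0 ≤ h 1 := by
    by_cases hz : ∃ t₀ ∈ Icc (0:ℝ) 1, γ t₀ = 0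
    · obtain ⟨t₀, ht₀, hγt₀⟩ := hz
      have hne' : ∀ t : ℝ, t ≠ t₀ → γ t ≠ 0 := by
        intro t htne hc
        exact htne (hinj (hc.trans hγt₀.symm))
      have h1 : h 0 ≤ h t₀ :=
        hmono 0 t₀ le_rfl ht₀.2 ht₀.1 (fun t ht => hne' t (ne_of_lt ht.2))
      have h2 : h t₀ ≤ h 1 :=
        hmono t₀ 1 ht₀.1 le_rfl ht₀.2 (fun t ht => hne' t (ne_of_gt ht.1))
      linarith
    · push_neg at hz
      exact hmono 0 1 le_rfl le_rfl zero_le_one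
        (fun t ht => hz t ⟨ht.1.le, ht.2.le⟩)
  -- conclude
  have hg10 : (inner ℝ (a ξ₁ - a ξ₂) Δ : ℝ) = g 1 - g 0 := by
    simp [hgdef, hγ0, hγ1, inner_sub_left]
  have hK : K ≤ g 1 - g 0 := by
    simp only [hhdef] at hmain
    linarith [hmain]
  rw [hg10]
  exact hK
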